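/- The function F_q(x) = (∫_{-π/q}^{π/q} sin(ω) e^{x sin ω} dω) / (∫_{-π/q}^{π/q} e^{x sin ω} dω) satisfies F_q'(0) = 1/2 - (q/(4π)) sin(2π/q). -/

import Mathlib

open Real

/-- The mean-field magnetization map for a measure constrained to two opposite
arcs of the circle of arc-length `2π/q`. -/
noncomputable def Fq (q : ℕ) (x : ℝ) : ℝ :=
    (∫ ω in (-π / q)..(π / q), Real.sin ω * Real.exp (x * Real.sin ω)) /
    (∫ ω in (-π / q)..(π / q), Real.exp (x * Real.sin ω))

open MeasureTheory intervalIntegral Metric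

lemma key (g : ℝ → ℝ) (hg : Continuous g) (a b : ℝ) :
    HasDerivAt (fun x => ∫ ω in a..b, g ω * Real.exp (x * Real.sin ω))
      (∫ ω in a..b, g ω * Real.sin ω) 0 := by
  have h := intervalIntegral.hasDerivAt_integral_of_dominated_loc_of_deriv_le
    (𝕜 := ℝ) (μ := volume) (a := a) (b := b)
    (F := fun x ω => g ω * Real.exp (x * Real.sin ω))
    (F' := fun x ω => g ω * Real.sin ω * Real.exp (x * Real.sin ω))
    (x₀ := 0) (bound := fun ω => |g ω| * Real.exp 1)
    (s := ball 0 1) (ball_mem_nhds 0 one_pos)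
    ?_ ?_ ?_ ?_ ?_ ?_
  · have h2 := h.2
    simp only [zero_mul, Real.exp_zero, mul_one] at h2
    exact h2
  · filter_upwards with x
    exact (hg.mul (Real.continuous_exp.comp (continuous_const.mul Real.continuous_sin))).aestronglyMeasurable
  · apply Continuous.intervalIntegrable
    exact hg.mul (Real.continuous_exp.comp (continuous_const.mul Real.continuous_sin))
  · exact ((hg.mul Real.continuous_sin).mul
      (Real.continuous_exp.comp (continuous_const.mul Real.continuous_sin))).aestronglyMeasurable
  · filter_upwards with ω _ x hx
    have hs : |Real.sin ω| ≤ 1 := Real.abs_sin_le_one ω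
    have hxs : x * Real.sin ω ≤ 1 := by
      calc x * Real.sin ω ≤ |x * Real.sin ω| := le_abs_self _
        _ = |x| * |Real.sin ω| := abs_mul _ _
        _ ≤ 1 * 1 := by
            apply mul_le_mul _ hs (abs_nonneg _) zero_le_one
            rw [← Real.norm_eq_abs]; exact (mem_ball_zero_iff.mp hx).le
        _ = 1 := one_mul 1
    have : ‖g ω * Real.sin ω * Real.exp (x * Real.sin ω)‖
        = |g ω| * |Real.sin ω| * Real.exp (x * Real.sin ω) := by
      rw [Real.norm_eq_abs, abs_mul, abs_mul, abs_of_pos (Real.exp_pos _)]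
    rw [this]
    calc |g ω| * |Real.sin ω| * Real.exp (x * Real.sin ω)
        ≤ |g ω| * 1 * Real.exp 1 := by
          have h1 : |g ω| * |Real.sin ω| ≤ |g ω| * 1 :=
            mul_le_mul_of_nonneg_left hs (abs_nonneg _)
          have h2 : Real.exp (x * Real.sin ω) ≤ Real.exp 1 := Real.exp_le_exp.2 hxs
          exact mul_le_mul h1 h2 (Real.exp_pos _).le (by positivity)
      _ = |g ω| * Real.exp 1 := by ring
  · exact (hg.abs.mul continuous_const).intervalIntegrable _ _
  · filter_upwards with ω _ x _
    have : HasDerivAt (fun x => x * Real.sin ω) (Real.sin ω) x := by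
      simpa using (hasDerivAt_id x).mul_const (Real.sin ω)
    have := (this.exp).const_mul (g ω)
    refine this.congr_deriv ?_
    ring

theorem stmt_2 (q : ℕ) (hq : 2 ≤ q) :
    HasDerivAt (Fq q) (1 / 2 - (q / (4 * π)) * Real.sin (2 * π / q)) 0 := by
  have hqR : (0:ℝ) < q := by positivity
  have hqne : (q:ℝ) ≠ 0 := ne_of_gt hqR
  have hπ : (0:ℝ) < π := Real.pi_pos
  set a : ℝ := -π / q with ha
  set b : ℝ := π / q with hb
  have hN := key Real.sin Real.continuous_sin a b
  have hD := key (fun _ => (1:ℝ)) continuous_const a b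
  simp only [one_mul] at hD
  -- value of numerator at 0
  have hN0 : (∫ ω in a..b, Real.sin ω * Real.exp ((0:ℝ) * Real.sin ω)) = 0 := by
    simp only [zero_mul, Real.exp_zero, mul_one, integral_sin]
    rw [ha, hb]
    rw [show -π / (q:ℝ) = -(π / q) by ring, Real.cos_neg]
    ring
  -- value of denominator at 0
  have hD0 : (∫ ω in a..b, Real.exp ((0:ℝ) * Real.sin ω)) = 2 * π / q := by
    simp only [zero_mul, Real.exp_zero]
    rw [_root_.intervalIntegral.integral_const, smul_eq_mul, mul_one, ha, hb]
    ring
  have hD0ne : (∫ ω in a..b, Real.exp ((0:ℝ) * Real.sin ω)) ≠ 0 := by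
    rw [hD0]; positivity
  -- derivative of numerator at 0
  have hNval : (∫ ω in a..b, Real.sin ω * Real.sin ω)
      = π / q - Real.sin (π / q) * Real.cos (π / q) := by
    simp only [← sq, integral_sin_sq]
    rw [ha, hb, show -π / (q:ℝ) = -(π / q) by ring, Real.sin_neg, Real.cos_neg]
    ring
  have hDval : (∫ ω in a..b, Real.sin ω) = 0 := by
    rw [integral_sin, ha, hb,
      show -π / (q:ℝ) = -(π / q) by ring, Real.cos_neg]
    ring
  rw [hNval] at hN
  rw [hDval] at hD
  have hF := hN.fun_div hD hD0ne
  have : Fq q = fun x => (∫ ω in a..b, Real.sin ω * Real.exp (x * Real.sin ω)) /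
      (∫ ω in a..b, Real.exp (x * Real.sin ω)) := rfl
  rw [this]
  refine hF.congr_deriv ?_
  symm
  rw [hN0, hD0]
  rw [show (2:ℝ) * π / q = 2 * (π / q) by ring, Real.sin_two_mul]
  field_simp
  ring
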